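/- arXiv:1809.09160 — 8 statements merged into one kernel-verified Lean document; each statement's English description precedes it below -/
import Mathlib

section
/- Let R be a (possibly noncommutative) ring, I a two-sided ideal of R, and S an arbitrary subset of R. Then the set N^r_{(R mod I)}(S) = {f ∈ R[x] : f_r(s) ∈ I for all s ∈ S} of right null-polynomials modulo I on S is a left ideal of R[x]: it is an additive subgroup of R[x] and for every g ∈ R[x] and every f ∈ N^r_{(R mod I)}(S), the product g·f lies in N^r_{(R mod I)}(S). -/
open Polynomial

/-- The set `N^r_{(R mod I)}(S)` of right null-polynomials modulo a two-sided ideal `I`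
on a subset `S` of `R`.  For a possibly noncommutative ring `R`, Mathlib's
`Polynomial.eval s f = ∑ k, f.coeff k * s ^ k` is exactly the right polynomial
function `f_r(s)`. -/
def rightNullPolysModOn (R : Type*) [Ring R] (I : TwoSidedIdeal R) (S : Set R) : Set R[X] :=
  {f : R[X] | ∀ s ∈ S, f.eval s ∈ I}

private lemma eval_monomial_mul {R : Type*} [Ring R] (n : ℕ) (a : R) (f : R[X]) (s : R) :
    ((monomial n a) * f).eval s = a * (f.eval s * s ^ n) := by
  rw [show (monomial n a : R[X]) = C a * X ^ n by simp [C_mul_X_pow_eq_monomial],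
    mul_assoc, eval_C_mul, X_pow_mul, eval_mul_X_pow]

/-- `N^r_{(R mod I)}(S)` is a left ideal of `R[x]`: an additive subgroup closed under
multiplication from the left by arbitrary polynomials. -/
theorem rightNullPolysModOn_isLeftIdeal (R : Type*) [Ring R] (I : TwoSidedIdeal R) (S : Set R) :
    (0 : R[X]) ∈ rightNullPolysModOn R I S ∧
    (∀ f ∈ rightNullPolysModOn R I S, ∀ g ∈ rightNullPolysModOn R I S,
      f + g ∈ rightNullPolysModOn R I S) ∧
    (∀ f ∈ rightNullPolysModOn R I S, -f ∈ rightNullPolysModOn R I S) ∧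
    (∀ g : R[X], ∀ f ∈ rightNullPolysModOn R I S, g * f ∈ rightNullPolysModOn R I S) := by
  refine ⟨fun s hs => by simp, fun f hf g hg s hs => ?_, fun f hf s hs => ?_,
    fun g f hf s hs => ?_⟩
  · simpa using I.add_mem (hf s hs) (hg s hs)
  · simpa using I.neg_mem (hf s hs)
  · induction g using Polynomial.induction_on' with
    | add p q hp hq => rw [add_mul]; simpa using I.add_mem hp hq
    | monomial n a =>
      rw [eval_monomial_mul]
      exact I.mul_mem_left _ _ (I.mul_mem_right _ _ (hf s hs))
end

section
/- Let D be an integral domain with quotient field K, A a finitely generated torsion-free D-algebra, B = A ⊗_D K, with A ∩ K = D under the canonical embeddings into B, and let S ⊆ A. Then S is a right ringset (i.e., Int^r_B(S,A) = {F ∈ B[x] : F_r(s) ∈ A for all s ∈ S} is closed under multiplication) if and only if, for every nonzero d ∈ D, the set N^r_{(A mod dA)}(S) = {f ∈ A[x] : f_r(s) ∈ dA for all s ∈ S} is a right ideal of A[x]. -/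
open Polynomial TensorProduct

/-- The set `Int^r_B(S,A)` of right integer-valued polynomials on `S ⊆ A`, where
`B = A ⊗_D K` and `A` is embedded in `B` via `a ↦ a ⊗ 1`.  Right evaluation is
Mathlib's `Polynomial.eval s f = ∑ k, f.coeff k * s ^ k`. -/
def IntRight (D K A : Type*) [CommRing D] [Field K] [Algebra D K]
    [Ring A] [Algebra D A] (S : Set A) : Set (A ⊗[D] K)[X] :=
  {F : (A ⊗[D] K)[X] | ∀ s ∈ S,
    F.eval (Algebra.TensorProduct.includeLeftRingHom (R := D) (B := K) s) ∈
      Set.range (Algebra.TensorProduct.includeLeftRingHom (R := D) (A := A) (B := K))}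

/-- A subset `N` of a (possibly noncommutative) ring is a right ideal:
an additive subgroup closed under multiplication from the right. -/
def IsRightIdealSet {R : Type*} [Ring R] (N : Set R) : Prop :=
  0 ∈ N ∧ (∀ a ∈ N, ∀ b ∈ N, a + b ∈ N) ∧ (∀ a ∈ N, -a ∈ N) ∧
    ∀ g : R, ∀ a ∈ N, a * g ∈ N

/-! ### Auxiliary lemmas -/

section PolyAux

variable {R : Type*} [Ring R]

/-- Multiplying the constant on the right by a power of `s` and evaluating at `s`. -/
theorem RW_eval_mul_C_pow (f : R[X]) (a s : R) (n : ℕ) :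
    (f * C (a * s ^ n)).eval s = (f * C a).eval s * s ^ n := by
  induction f using Polynomial.induction_on' with
  | add p q hp hq =>
      rw [add_mul, eval_add, hp, hq, add_mul, eval_add, add_mul]
  | monomial m b =>
      rw [monomial_mul_C, monomial_mul_C, eval_monomial, eval_monomial]
      simp only [mul_assoc, ← pow_add]
      rw [Nat.add_comm]

/-- The key identity: right-evaluation of a product at `s` equals the right-evaluation
at `s` of `f * C (g.eval s)`. -/
theorem RW_eval_mul (f g : R[X]) (s : R) :
    (f * g).eval s = (f * C (g.eval s)).eval s := by
  induction g using Polynomial.induction_on' with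
  | add p q hp hq =>
      rw [mul_add, eval_add, hp, hq, ← eval_add, ← mul_add, ← C_add, ← eval_add]
  | monomial n a =>
      rw [eval_monomial, RW_eval_mul_C_pow, ← C_mul_X_pow_eq_monomial, ← mul_assoc,
        eval_mul_X_pow]

/-- Evaluation of `f * C c` when `c` is central. -/
theorem RW_eval_mul_C_central (f : R[X]) (c s : R) (hc : ∀ x, x * c = c * x) :
    (f * C c).eval s = f.eval s * c := by
  induction f using Polynomial.induction_on' with
  | add p q hp hq => rw [add_mul, eval_add, hp, hq, eval_add, add_mul]
  | monomial m b =>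
      rw [monomial_mul_C, eval_monomial, eval_monomial, mul_assoc b c, ← hc (s ^ m),
        ← mul_assoc]

end PolyAux

section TensorAux

variable {D : Type*} [CommRing D] [IsDomain D]
  {K : Type*} [Field K] [Algebra D K] [IsFractionRing D K]
  {A : Type*} [Ring A] [Algebra D A]

local notation "ι" => Algebra.TensorProduct.includeLeftRingHom (R := D) (A := A) (B := K)

theorem RW_iota_smul (d : D) (a : A) : ι (d • a) = d • ι a := by
  simp only [Algebra.TensorProduct.includeLeftRingHom_apply, TensorProduct.smul_tmul']

theorem RW_iota_injective [NoZeroSMulDivisors D A] : Function.Injective ι := by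
  have hbc : IsLocalizedModule (nonZeroDivisors D) (TensorProduct.mk D K A 1) :=
    (isLocalizedModule_iff_isBaseChange (nonZeroDivisors D) K _).mpr
      (TensorProduct.isBaseChange D A K)
  intro a a' h
  have hc := congrArg (TensorProduct.comm D A K) h
  simp only [Algebra.TensorProduct.includeLeftRingHom_apply, TensorProduct.comm_tmul] at hc
  have h2 : (TensorProduct.mk D K A 1) (a - a') = 0 := by
    simp only [map_sub, TensorProduct.mk_apply, hc, sub_self]
  obtain ⟨s, hs⟩ := (IsLocalizedModule.eq_zero_iff (nonZeroDivisors D) _).mp h2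
  rw [Submonoid.smul_def] at hs
  have := (smul_eq_zero.mp hs).resolve_left (nonZeroDivisors.coe_ne_zero s)
  exact sub_eq_zero.mp this

/-- Elements of the form `1 ⊗ k` are central in `A ⊗[D] K`. -/
theorem RW_tmul_one_comm (k : K) (x : A ⊗[D] K) :
    x * ((1 : A) ⊗ₜ[D] k) = ((1 : A) ⊗ₜ[D] k) * x := by
  induction x using TensorProduct.induction_on with
  | zero => simp
  | tmul a k' => simp [Algebra.TensorProduct.tmul_mul_tmul, mul_comm]
  | add x y hx hy => rw [add_mul, mul_add, hx, hy]

theorem RW_smul_u (d : D) (hd : d ≠ 0) :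
    d • ((1 : A) ⊗ₜ[D] (algebraMap D K d)⁻¹) = 1 := by
  have hne : algebraMap D K d ≠ 0 := fun h => hd ((IsFractionRing.injective D K) (by simp [h]))
  rw [← TensorProduct.tmul_smul, Algebra.smul_def, mul_inv_cancel₀ hne,
    Algebra.TensorProduct.one_def]

theorem RW_smul_mul_u (d : D) (hd : d ≠ 0) (x : A ⊗[D] K) :
    (d • x) * ((1 : A) ⊗ₜ[D] (algebraMap D K d)⁻¹) = x := by
  rw [smul_mul_assoc, ← mul_smul_comm, RW_smul_u d hd, mul_one]

theorem RW_smul_cancel (d : D) (hd : d ≠ 0) {x y : A ⊗[D] K}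
    (h : d • x = d • y) : x = y := by
  rw [← RW_smul_mul_u d hd x, ← RW_smul_mul_u d hd y, h]

theorem RW_exists_denom (b : A ⊗[D] K) :
    ∃ d : D, d ≠ 0 ∧ ∃ a : A, ι a = d • b := by
  induction b using TensorProduct.induction_on with
  | zero => exact ⟨1, one_ne_zero, 0, by simp⟩
  | tmul a k =>
      obtain ⟨⟨c, e⟩, hce⟩ := IsLocalization.surj (nonZeroDivisors D) k
      refine ⟨e, nonZeroDivisors.coe_ne_zero e, c • a, ?_⟩
      have h1 : (e : D) • (a ⊗ₜ[D] k) = a ⊗ₜ[D] ((e : D) • k) :=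
        (TensorProduct.tmul_smul _ _ _).symm
      have h2 : (e : D) • k = algebraMap D K c := by
        rw [Algebra.smul_def, mul_comm]; exact hce
      rw [h1, h2, Algebra.TensorProduct.includeLeftRingHom_apply,
        Algebra.algebraMap_eq_smul_one, TensorProduct.tmul_smul, TensorProduct.smul_tmul']
  | add x y hx hy =>
      obtain ⟨d1, hd1, a1, ha1⟩ := hx
      obtain ⟨d2, hd2, a2, ha2⟩ := hy
      refine ⟨d1 * d2, mul_ne_zero hd1 hd2, d2 • a1 + d1 • a2, ?_⟩
      rw [map_add, RW_iota_smul, RW_iota_smul, ha1, ha2, smul_add, smul_smul, smul_smul,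
        mul_comm d2 d1]

theorem RW_map_iota_smul (d : D) (f : A[X]) :
    (d • f).map (ι) = d • f.map ι := by
  ext n
  simp only [Polynomial.coeff_map, Polynomial.coeff_smul, RW_iota_smul]

theorem RW_exists_poly_denom (F : (A ⊗[D] K)[X]) :
    ∃ d : D, d ≠ 0 ∧ ∃ f : A[X], f.map ι = d • F := by
  induction F using Polynomial.induction_on' with
  | monomial n b =>
      obtain ⟨d, hd, a, ha⟩ := RW_exists_denom b
      exact ⟨d, hd, monomial n a, by rw [Polynomial.map_monomial, ha, smul_monomial]⟩
  | add p q hp hq =>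
      obtain ⟨d1, hd1, f1, hf1⟩ := hp
      obtain ⟨d2, hd2, f2, hf2⟩ := hq
      refine ⟨d1 * d2, mul_ne_zero hd1 hd2, d2 • f1 + d1 • f2, ?_⟩
      rw [Polynomial.map_add, RW_map_iota_smul, RW_map_iota_smul, hf1, hf2, smul_add,
        smul_smul, smul_smul, mul_comm d2 d1]

theorem RW_map_eval (f : A[X]) (s : A) :
    (f.map ι).eval (ι s) = ι (f.eval s) := by
  rw [Polynomial.eval_map, Polynomial.eval₂_at_apply]

end TensorAux

/-- Theorem (link): `S ⊆ A` is a right ringset iff, for every nonzero `d ∈ D`,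
`N^r_{(A mod dA)}(S) = {f ∈ A[x] : f_r(s) ∈ dA for all s ∈ S}` is a right ideal of `A[x]`. -/
theorem rightRingset_iff_rightNullIdealSet_mod
    (D : Type*) [CommRing D] [IsDomain D]
    (K : Type*) [Field K] [Algebra D K] [IsFractionRing D K]
    (A : Type*) [Ring A] [Algebra D A] [Module.Finite D A] [NoZeroSMulDivisors D A]
    (hAK : ∀ b : A ⊗[D] K,
      b ∈ Set.range (Algebra.TensorProduct.includeLeftRingHom (R := D) (A := A) (B := K)) →
      b ∈ Set.range (Algebra.TensorProduct.includeRight (R := D) (A := A) (B := K)) →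
      b ∈ Set.range (algebraMap D (A ⊗[D] K)))
    (S : Set A) :
    (∀ F ∈ IntRight D K A S, ∀ G ∈ IntRight D K A S, F * G ∈ IntRight D K A S) ↔
    (∀ d : D, d ≠ 0 →
      IsRightIdealSet {f : A[X] | ∀ s ∈ S, f.eval s ∈ Set.range (fun a : A => d • a)}) := by
  clear hAK
  constructor
  · -- Int closed under multiplication ⇒ each N_d is a right ideal
    intro hInt d hd
    refine ⟨?_, ?_, ?_, ?_⟩
    · intro s _
      exact ⟨0, by simp⟩
    · intro f hf g hg s hs
      obtain ⟨a, ha⟩ := hf s hs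
      obtain ⟨b, hb⟩ := hg s hs
      have ha' : d • a = f.eval s := ha
      have hb' : d • b = g.eval s := hb
      refine ⟨a + b, ?_⟩
      show d • (a + b) = (f + g).eval s
      rw [smul_add, eval_add, ha', hb']
    · intro f hf s hs
      obtain ⟨a, ha⟩ := hf s hs
      have ha' : d • a = f.eval s := ha
      refine ⟨-a, ?_⟩
      show d • (-a) = (-f).eval s
      rw [smul_neg, eval_neg, ha']
    · intro g f hf s hs
      -- reduce to multiplication by a constant
      show (f * g).eval s ∈ _
      rw [RW_eval_mul]
      set b := g.eval s with hbdef
      -- show `f * C b ∈ N_d` using closure of Int under multiplication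
      set u : A ⊗[D] K := (1 : A) ⊗ₜ[D] (algebraMap D K d)⁻¹ with hu
      set F : (A ⊗[D] K)[X] := (f.map (Algebra.TensorProduct.includeLeftRingHom
        (R := D) (A := A) (B := K))) * C u with hF
      set G : (A ⊗[D] K)[X] := C (Algebra.TensorProduct.includeLeftRingHom
        (R := D) (A := A) (B := K) b) with hG
      have hFInt : F ∈ IntRight D K A S := by
        intro s' hs'
        obtain ⟨a', ha'0⟩ := hf s' hs'
        have ha' : d • a' = f.eval s' := ha'0
        simp only [hF]
        rw [RW_eval_mul_C_central _ _ _ (fun x => RW_tmul_one_comm _ x), RW_map_eval,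
          ← ha']
        refine ⟨a', ?_⟩
        show _ = Algebra.TensorProduct.includeLeftRingHom (d • a') * u
        rw [RW_iota_smul, RW_smul_mul_u d hd]
      have hGInt : G ∈ IntRight D K A S := by
        intro s' _
        exact ⟨b, by simp [hG]⟩
      have hFG := hInt F hFInt G hGInt s hs
      obtain ⟨a, ha⟩ := hFG
      have hFGeq : F * G = ((f * C b).map (Algebra.TensorProduct.includeLeftRingHom
          (R := D) (A := A) (B := K))) * C u := by
        rw [hF, hG, Polynomial.map_mul, Polynomial.map_C, mul_assoc, mul_assoc, ← C_mul,
          ← C_mul, hu, RW_tmul_one_comm]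
      rw [hFGeq, RW_eval_mul_C_central _ _ _ (fun x => RW_tmul_one_comm _ x), RW_map_eval]
        at ha
      -- `ι ((f*C b).eval s) * u = ι a`; multiply by `d`
      have h2 : Algebra.TensorProduct.includeLeftRingHom (R := D) (A := A) (B := K)
          ((f * C b).eval s) = Algebra.TensorProduct.includeLeftRingHom (d • a) := by
        rw [RW_iota_smul, ha, ← smul_mul_assoc, RW_smul_mul_u d hd]
      refine ⟨a, ?_⟩
      show d • a = (f * C b).eval s
      exact (RW_iota_injective h2).symm
  · -- each N_d a right ideal ⇒ Int closed under multiplication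
    intro hN F hF G hG s hs
    obtain ⟨d, hd, f, hf⟩ := RW_exists_poly_denom F
    obtain ⟨e, he, g, hg⟩ := RW_exists_poly_denom G
    have hmem : ∀ (c : D), c ≠ 0 → ∀ (H : (A ⊗[D] K)[X]) (h : A[X]),
        h.map (Algebra.TensorProduct.includeLeftRingHom (R := D) (A := A) (B := K)) = c • H →
        H ∈ IntRight D K A S →
        h ∈ {f : A[X] | ∀ s ∈ S, f.eval s ∈ Set.range (fun a : A => c • a)} := by
      intro c hc H h hh hH s' hs'
      obtain ⟨a, ha⟩ := hH s' hs'
      refine ⟨a, show c • a = h.eval s' from RW_iota_injective (D := D) (K := K) (A := A) ?_⟩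
      show Algebra.TensorProduct.includeLeftRingHom (c • a) = _
      rw [RW_iota_smul, ha, ← eval_smul, ← hh, RW_map_eval]
    have hfN := hmem d hd F f hf hF
    have hgN := hmem e he G g hg hG
    obtain ⟨b, hb0⟩ := hgN s hs
    have hb : e • b = g.eval s := hb0
    have hfCb := (hN d hd).2.2.2 (C b) f hfN s hs
    obtain ⟨a, ha0⟩ := hfCb
    have ha : d • a = (f * C b).eval s := ha0
    -- (f*g).eval s = (d*e) • a
    have h2 : (f * g).eval s = (d * e) • a := by
      rw [RW_eval_mul, ← hb, ← Polynomial.smul_C, mul_smul_comm, eval_smul, ← ha,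
        smul_smul, mul_comm e d]
    have h3 : (f * g).map (Algebra.TensorProduct.includeLeftRingHom
        (R := D) (A := A) (B := K)) = (d * e) • (F * G) := by
      rw [Polynomial.map_mul, hf, hg, smul_mul_smul_comm]
    have h4 : (d * e) • ((F * G).eval (Algebra.TensorProduct.includeLeftRingHom
        (R := D) (A := A) (B := K) s)) =
        (d * e) • (Algebra.TensorProduct.includeLeftRingHom (R := D) (A := A) (B := K) a) := by
      rw [← eval_smul, ← h3, RW_map_eval, h2, RW_iota_smul]
    exact ⟨a, ((RW_smul_cancel (d * e) (mul_ne_zero hd he) h4).symm :)⟩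
end

section
/- Let D be an integral domain with quotient field K, A a finitely generated torsion-free D-algebra, B = A ⊗_D K, with A ∩ K = D under the canonical embeddings into B, and suppose that ⋂_{d ∈ D∖{0}} dA = (0). If s ∈ A is not in the center of A, then the singleton {s} is not a right ringset; explicitly, if t ∈ A satisfies ts ≠ st and d ∈ D∖{0} is chosen with ts − st ∉ dA, then the polynomials F(x) = d^{-1}(x − s) and the constant polynomial t both belong to Int^r_B({s},A), but their product F·t does not, since (F t)_r(s) = d^{-1}(ts − st) ∉ A. -/
open Polynomial TensorProduct

lemma tmul_one_inj
    (D : Type*) [CommRing D] [IsDomain D]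
    (K : Type*) [Field K] [Algebra D K] [IsFractionRing D K]
    (A : Type*) [Ring A] [Algebra D A] [NoZeroSMulDivisors D A]
    {a b : A} (h : a ⊗ₜ[D] (1 : K) = b ⊗ₜ[D] (1 : K)) : a = b := by
  let f : A →ₗ[D] A ⊗[D] K :=
    (TensorProduct.comm D K A).toLinearMap.comp (TensorProduct.mk D K A 1)
  have h1 : IsLocalizedModule (nonZeroDivisors D) (TensorProduct.mk D K A 1) :=
    (isLocalizedModule_iff_isBaseChange (nonZeroDivisors D) K _).mpr
      (TensorProduct.isBaseChange D A K)
  have h2 : IsLocalizedModule (nonZeroDivisors D) f :=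
    IsLocalizedModule.of_linearEquiv (nonZeroDivisors D) _ _
  have hf : f a = f b := by
    simp only [f, LinearMap.comp_apply, TensorProduct.mk_apply, LinearEquiv.coe_coe,
      TensorProduct.comm_tmul]
    exact h
  obtain ⟨c, hc⟩ := (IsLocalizedModule.eq_iff_exists (nonZeroDivisors D) f).mp hf
  exact smul_right_injective A (nonZeroDivisors.ne_zero c.2) hc

/-- Suppose `⋂_{d ∈ D∖{0}} dA = (0)`.  If `s ∈ A` is not central, then `{s}` is not a
right ringset; explicitly, if `t s ≠ s t` and `d ≠ 0` with `t s − s t ∉ dA`, then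
`F(x) = d⁻¹ (x − s)` and the constant polynomial `t` both lie in `Int^r_B({s},A)`,
but their product `F · t` does not, since `(F t)_r(s) = d⁻¹(t s − s t) ∉ A`. -/
theorem singleton_not_rightRingset_of_not_central
    (D : Type*) [CommRing D] [IsDomain D]
    (K : Type*) [Field K] [Algebra D K] [IsFractionRing D K]
    (A : Type*) [Ring A] [Algebra D A] [Module.Finite D A] [NoZeroSMulDivisors D A]
    (hAK : ∀ b : A ⊗[D] K,
      b ∈ Set.range (Algebra.TensorProduct.includeLeftRingHom (R := D) (A := A) (B := K)) →
      b ∈ Set.range (Algebra.TensorProduct.includeRight (R := D) (A := A) (B := K)) →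
      b ∈ Set.range (algebraMap D (A ⊗[D] K)))
    (hcap : (⋂ (d : D) (_ : d ≠ 0), Set.range fun a : A => d • a) = {0})
    (s : A) (hs : s ∉ Set.center A) :
    ¬ (∀ F ∈ IntRight D K A {s}, ∀ G ∈ IntRight D K A {s},
        F * G ∈ IntRight D K A {s}) ∧
    (∀ t : A, t * s ≠ s * t → ∀ d : D, d ≠ 0 →
      t * s - s * t ∉ Set.range (fun a : A => d • a) →
      (C (Algebra.TensorProduct.includeRight (R := D) (A := A) (B := K)
            ((algebraMap D K d)⁻¹)) *
          (X - C (Algebra.TensorProduct.includeLeftRingHom (R := D) (B := K) s))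
          ∈ IntRight D K A {s}) ∧
      (C (Algebra.TensorProduct.includeLeftRingHom (R := D) (B := K) t)
          ∈ IntRight D K A {s}) ∧
      (C (Algebra.TensorProduct.includeRight (R := D) (A := A) (B := K)
            ((algebraMap D K d)⁻¹)) *
          (X - C (Algebra.TensorProduct.includeLeftRingHom (R := D) (B := K) s)) *
          C (Algebra.TensorProduct.includeLeftRingHom (R := D) (B := K) t)
          ∉ IntRight D K A {s})) := by
  have key : ∀ t : A, t * s ≠ s * t → ∀ d : D, d ≠ 0 →
      t * s - s * t ∉ Set.range (fun a : A => d • a) →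
      (C (Algebra.TensorProduct.includeRight (R := D) (A := A) (B := K)
            ((algebraMap D K d)⁻¹)) *
          (X - C (Algebra.TensorProduct.includeLeftRingHom (R := D) (B := K) s))
          ∈ IntRight D K A {s}) ∧
      (C (Algebra.TensorProduct.includeLeftRingHom (R := D) (B := K) t)
          ∈ IntRight D K A {s}) ∧
      (C (Algebra.TensorProduct.includeRight (R := D) (A := A) (B := K)
            ((algebraMap D K d)⁻¹)) *
          (X - C (Algebra.TensorProduct.includeLeftRingHom (R := D) (B := K) s)) *
          C (Algebra.TensorProduct.includeLeftRingHom (R := D) (B := K) t)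
          ∉ IntRight D K A {s}) := by
    intro t ht d hd hdt
    set c : A ⊗[D] K := Algebra.TensorProduct.includeRight (R := D) (A := A) (B := K)
      ((algebraMap D K d)⁻¹) with hc
    set u : A ⊗[D] K := Algebra.TensorProduct.includeLeftRingHom (R := D) (B := K) s with hu
    set t' : A ⊗[D] K := Algebra.TensorProduct.includeLeftRingHom (R := D) (B := K) t with ht'
    refine ⟨?_, ?_, ?_⟩
    · intro x hx
      rw [Set.mem_singleton_iff] at hx
      subst hx
      rw [eval_C_mul, eval_sub, eval_X, eval_C, ← hu, sub_self, mul_zero]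
      exact ⟨0, map_zero _⟩
    · intro x hx
      rw [Set.mem_singleton_iff] at hx
      subst hx
      rw [eval_C]
      exact ⟨t, rfl⟩
    · intro hmem
      have hval := hmem s rfl
      rw [← hu] at hval
      have heq : (C c * (X - C u) * C t').eval u = c * (t' * u - u * t') := by
        have : C c * (X - C u) * C t' = C c * (C t' * X - C (u * t')) := by
          rw [mul_assoc, sub_mul, Polynomial.X_mul, ← C_mul]
        rw [this, eval_C_mul, eval_sub, eval_C, eval_C_mul, eval_X]
      rw [heq] at hval
      obtain ⟨a, ha⟩ := hval
      -- compute c * (t' * u - u * t') = (t*s - s*t) ⊗ d⁻¹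
      have hcomp : c * (t' * u - u * t') = (t * s - s * t) ⊗ₜ[D] (algebraMap D K d)⁻¹ := by
        simp only [hc, hu, ht', Algebra.TensorProduct.includeRight_apply,
          Algebra.TensorProduct.includeLeftRingHom_apply]
        rw [Algebra.TensorProduct.tmul_mul_tmul, Algebra.TensorProduct.tmul_mul_tmul,
          ← TensorProduct.sub_tmul, Algebra.TensorProduct.tmul_mul_tmul]
        simp
      rw [hcomp] at ha
      -- multiply by d
      have hd' : algebraMap D K d ≠ 0 := by
        simpa using (IsFractionRing.to_map_eq_zero_iff (K := K)).not.mpr hd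
      have hsm : (d • a) ⊗ₜ[D] (1 : K) = (t * s - s * t) ⊗ₜ[D] (1 : K) := by
        have := congrArg (fun z => d • z) ha
        simp only [Algebra.TensorProduct.includeLeftRingHom_apply,
          TensorProduct.smul_tmul', TensorProduct.smul_tmul] at this
        rw [TensorProduct.smul_tmul, this]
        congr 1
        rw [Algebra.smul_def, mul_inv_cancel₀ hd']
      exact hdt ⟨a, tmul_one_inj D K A hsm⟩
  refine ⟨?_, key⟩
  · intro hcl
    rw [Semigroup.mem_center_iff] at hs
    push_neg at hs
    obtain ⟨t, ht⟩ := hs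
    have hne : t * s - s * t ≠ 0 := sub_ne_zero_of_ne ht
    have : t * s - s * t ∉ (⋂ (d : D) (_ : d ≠ 0), Set.range fun a : A => d • a) := by
      rw [hcap]; simpa using hne
    simp only [Set.mem_iInter, not_forall] at this
    obtain ⟨d, hd, hdt⟩ := this
    obtain ⟨h1, h2, h3⟩ := key t ht d hd hdt
    exact h3 (hcl _ h1 _ h2)
end

section
/- Let R be a (possibly noncommutative) ring, T a subring of R, I a two-sided ideal of T, S ⊆ T, and C ⊆ R[x]. If Pol^r(R,S,I) is closed under right multiplication by the constant polynomials c_r(s) for all c ∈ C and s ∈ S (i.e., f ∈ Pol^r(R,S,I) and c ∈ C, s ∈ S imply f·c_r(s) ∈ Pol^r(R,S,I)), then Pol^r(R,S,I) is closed under right multiplication by elements of C (i.e., f ∈ Pol^r(R,S,I) and c ∈ C imply f·c ∈ Pol^r(R,S,I)). -/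
open Polynomial

lemma eval_mul_C_aux {R : Type*} [Ring R] (f : R[X]) (b s : R) :
    (f * Polynomial.C b).eval s =
      ∑ n ∈ Finset.range (f.natDegree + 1), f.coeff n * b * s ^ n := by
  rw [Polynomial.eval_eq_sum_range' (lt_of_le_of_lt (Polynomial.natDegree_mul_C_le f b)
    (Nat.lt_succ_self _))]
  simp [Polynomial.coeff_mul_C]

lemma eval_mul_eq_eval_mul_C_eval {R : Type*} [Ring R] (f c : R[X]) (s : R) :
    (f * c).eval s = (f * Polynomial.C (c.eval s)).eval s := by
  induction c using Polynomial.induction_on' with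
  | add p q hp hq =>
    rw [mul_add, Polynomial.eval_add, hp, hq, Polynomial.eval_add, Polynomial.C_add, mul_add,
      Polynomial.eval_add]
  | monomial k a =>
    rw [← Polynomial.C_mul_X_pow_eq_monomial]
    rw [← mul_assoc, Polynomial.eval_mul_X_pow, eval_mul_C_aux,
      Polynomial.C_mul_X_pow_eq_monomial, Polynomial.eval_monomial,
      eval_mul_C_aux, Finset.sum_mul]
    refine Finset.sum_congr rfl fun n _ => ?_
    rw [mul_assoc, mul_assoc, mul_assoc, mul_assoc, pow_mul_comm]

/-- `Pol^r(R,S,I)`: the polynomials in `R[x]` mapping every element of `S ⊆ T` into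
the two-sided ideal `I` of the subring `T`, under right substitution (Mathlib's
`Polynomial.eval s f = ∑ k, f.coeff k * s ^ k` is exactly right evaluation). -/
def PolRight {R : Type*} [Ring R] (T : Subring R) (I : TwoSidedIdeal T) (S : Set T) :
    Set R[X] :=
  {f : R[X] | ∀ s ∈ S, f.eval (s : R) ∈ (fun t : T => (t : R)) '' (I : Set T)}

/-- If `Pol^r(R,S,I)` is closed under right multiplication by the constants `c_r(s)`
(`c ∈ C`, `s ∈ S`), then it is closed under right multiplication by the elements of
`C ⊆ R[x]`. -/
theorem polRight_closed_under_rightMul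
    {R : Type*} [Ring R] (T : Subring R) (I : TwoSidedIdeal T) (S : Set T)
    (C : Set R[X])
    (h : ∀ f ∈ PolRight T I S, ∀ c ∈ C, ∀ s ∈ S,
      f * Polynomial.C (c.eval (s : R)) ∈ PolRight T I S) :
    ∀ f ∈ PolRight T I S, ∀ c ∈ C, f * c ∈ PolRight T I S := by
  intro f hf c hc s hs
  rw [eval_mul_eq_eval_mul_C_eval]
  exact h f hf c hc s hs s hs
end

section
/- Let D be an integral domain with quotient field K, A a finitely generated torsion-free D-algebra, B = A ⊗_D K, with A ∩ K = D under the canonical embeddings into B, and S ⊆ A. Then Int^r_B(S,A) is closed under multiplication (i.e., is a ring) if and only if Int^r_B(S,A) is closed under right multiplication by the constant polynomials from A (i.e., F ∈ Int^r_B(S,A) and a ∈ A imply F·a ∈ Int^r_B(S,A)). -/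
open Polynomial TensorProduct

private lemma eval_mul_C_aux_s13 {R : Type*} [Semiring R] (F : R[X]) (b t : R) (k : ℕ) :
    (F * C (b * t ^ k)).eval t = (F * C b).eval t * t ^ k := by
  induction F using Polynomial.induction_on' with
  | add p q hp hq => rw [add_mul, add_mul, eval_add, eval_add, hp, hq, add_mul]
  | monomial n c =>
      have h : ∀ r : R, monomial n c * C r = monomial n (c * r) := by
        intro r
        rw [← monomial_zero_left, monomial_mul_monomial, add_zero]
      rw [h, h, eval_monomial, eval_monomial, mul_assoc, mul_assoc, mul_assoc,
        (Commute.pow_pow_self t k n).eq]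
      exact (mul_assoc _ _ _).symm

private lemma eval_mul_eq_eval_mul_C_eval_s13 {R : Type*} [Semiring R] (F G : R[X]) (t : R) :
    (F * G).eval t = (F * C (G.eval t)).eval t := by
  induction G using Polynomial.induction_on' with
  | add p q hp hq => simp [mul_add, hp, hq, add_mul]
  | monomial n b =>
      rw [eval_monomial, ← C_mul_X_pow_eq_monomial, ← mul_assoc, eval_mul_X_pow,
        eval_mul_C_aux_s13]

/-- `Int^r_B(S,A)` is closed under multiplication (i.e. is a ring) iff it is closed
under right multiplication by the constant polynomials from `A`. -/
theorem intRight_ring_iff_closed_under_constants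
    (D : Type*) [CommRing D] [IsDomain D]
    (K : Type*) [Field K] [Algebra D K] [IsFractionRing D K]
    (A : Type*) [Ring A] [Algebra D A] [Module.Finite D A] [NoZeroSMulDivisors D A]
    (hAK : ∀ b : A ⊗[D] K,
      b ∈ Set.range (Algebra.TensorProduct.includeLeftRingHom (R := D) (A := A) (B := K)) →
      b ∈ Set.range (Algebra.TensorProduct.includeRight (R := D) (A := A) (B := K)) →
      b ∈ Set.range (algebraMap D (A ⊗[D] K)))
    (S : Set A) :
    (∀ F ∈ IntRight D K A S, ∀ G ∈ IntRight D K A S, F * G ∈ IntRight D K A S) ↔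
    (∀ F ∈ IntRight D K A S, ∀ a : A,
      F * Polynomial.C (Algebra.TensorProduct.includeLeftRingHom (R := D) (B := K) a)
        ∈ IntRight D K A S) := by
  constructor
  · intro h F hF a
    refine h F hF _ ?_
    intro s _
    simp only [eval_C]
    exact ⟨a, rfl⟩
  · intro h F hF G hG s hs
    obtain ⟨a, ha⟩ := hG s hs
    have key := h F hF a s hs
    rw [eval_mul_eq_eval_mul_C_eval_s13, ← ha]
    exact key
end

section
/- Let R be a (possibly noncommutative) ring, T a subring of R, and I a two-sided ideal of T. Suppose T is generated, as an algebra over its center Z(T), by its units. Then: (1) Pol^r(R,T,I) is closed under right multiplication by the constant polynomials from T, i.e., it is a right T-module; and (2) more generally, for every subset S ⊆ T that is closed under conjugation by units of T (u s u^{-1} ∈ S whenever s ∈ S and u is a unit of T), Pol^r(R,S,I) is closed under right multiplication by the constant polynomials from T, i.e., it is a right T-module. -/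
open Polynomial

private lemma eval_mul_C_eq {R : Type*} [Ring R] (f : R[X]) (t s : R) :
    (f * Polynomial.C t).eval s
      = ∑ k ∈ Finset.range (f.natDegree + 1), f.coeff k * t * s ^ k := by
  have hdeg : (f * Polynomial.C t).natDegree < f.natDegree + 1 := by
    have := Polynomial.natDegree_mul_le (p := f) (q := Polynomial.C t)
    simpa [Polynomial.natDegree_C] using Nat.lt_succ_of_le this
  rw [Polynomial.eval_eq_sum_range' hdeg]
  simp [Polynomial.coeff_mul_C]

private lemma conj_pow_aux {R : Type*} [Ring R] (a b s : R) (hab : a * b = 1)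
    (hba : b * a = 1) (k : ℕ) : (a * s * b) ^ k = a * s ^ k * b := by
  induction k with
  | zero => simpa using hab.symm
  | succ k ih =>
      rw [pow_succ, ih, pow_succ]
      calc a * s ^ k * b * (a * s * b) = a * s ^ k * (b * a) * s * b := by
            simp [mul_assoc]
        _ = a * (s ^ k * s) * b := by rw [hba]; simp [mul_assoc]

/-- If the subring `T` of `R` is generated by units as an algebra over its center
(every element of `T` is a finite sum of products of central elements and units of `T`),
then (1) `Pol^r(R,T,I)` is closed under right multiplication by constants from `T`
(i.e. is a right `T`-module), and (2) more generally, for every `S ⊆ T` closed under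
conjugation by units of `T`, `Pol^r(R,S,I)` is closed under right multiplication by
constants from `T` (i.e. is a right `T`-module). -/
theorem polRight_rightModule_of_generated_by_units
    {R : Type*} [Ring R] (T : Subring R) (I : TwoSidedIdeal T)
    (hgen : Subring.closure (Set.center T ∪ {u : T | IsUnit u}) = ⊤) :
    (∀ f ∈ PolRight T I (Set.univ : Set T), ∀ t : T,
      f * Polynomial.C (t : R) ∈ PolRight T I (Set.univ : Set T)) ∧
    (∀ S : Set T, (∀ u : Units T, ∀ s ∈ S, (u : T) * s * ((u⁻¹ : Units T) : T) ∈ S) →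
      ∀ f ∈ PolRight T I S, ∀ t : T, f * Polynomial.C (t : R) ∈ PolRight T I S) := by
  have key : ∀ S : Set T,
      (∀ u : Units T, ∀ s ∈ S, (u : T) * s * ((u⁻¹ : Units T) : T) ∈ S) →
      ∀ t : T, ∀ f ∈ PolRight T I S, f * Polynomial.C (t : R) ∈ PolRight T I S := by
    intro S hS t
    have ht : t ∈ Subring.closure (Set.center T ∪ {u : T | IsUnit u}) := by
      rw [hgen]; trivial
    induction ht using Subring.closure_induction with
    | mem x hx =>
        intro f hf s hs
        rcases hx with hx | hx
        · -- central case
          have hcomm : ∀ y : T, (x : R) * (y : R) = (y : R) * (x : R) := by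
            intro y
            have := (Set.mem_center_iff.mp hx).comm y
            exact_mod_cast congrArg (Subtype.val) this
          obtain ⟨i, hi, hie⟩ := hf s hs
          refine ⟨i * ⟨x, x.2⟩, I.mul_mem_right _ _ hi, ?_⟩
          have hx' : Commute ((s : T) : R) (x : R) := (hcomm s).symm
          rw [eval_mul_C_eq]
          have : ∀ k : ℕ, f.coeff k * (x : R) * ((s : T) : R) ^ k
              = f.coeff k * ((s : T) : R) ^ k * (x : R) := by
            intro k
            rw [mul_assoc, mul_assoc, (hx'.pow_left k).eq]
          simp only [this, ← Finset.sum_mul]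
          rw [← Polynomial.eval_eq_sum_range, ← hie]
          rfl
        · -- unit case
          obtain ⟨u, rfl⟩ := hx
          have hab : ((u : T) : R) * (((u⁻¹ : Units T) : T) : R) = 1 := by
            exact_mod_cast congrArg Subtype.val u.mul_inv
          have hba : (((u⁻¹ : Units T) : T) : R) * ((u : T) : R) = 1 := by
            exact_mod_cast congrArg Subtype.val u.inv_mul
          obtain ⟨i, hi, hie⟩ := hf _ (hS u s hs)
          refine ⟨i * u, I.mul_mem_right _ _ hi, ?_⟩
          rw [eval_mul_C_eq]
          have : ∀ k : ℕ, f.coeff k * ((u : T) : R) * ((s : T) : R) ^ k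
              = f.coeff k * ((((u : T) * s * ((u⁻¹ : Units T) : T) : T) : R)) ^ k
                * ((u : T) : R) := by
            intro k
            push_cast
            rw [conj_pow_aux _ _ _ hab hba]
            symm
            calc f.coeff k * ((↑↑u : R) * (↑s : R) ^ k * ↑↑u⁻¹) * ↑↑u
                = f.coeff k * ((↑↑u : R) * (↑s : R) ^ k) * ((↑↑u⁻¹ : R) * ↑↑u) := by
                  simp [mul_assoc]
              _ = f.coeff k * (↑↑u : R) * (↑s : R) ^ k := by
                  rw [hba, mul_one, ← mul_assoc]
          simp only [this, ← Finset.sum_mul]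
          rw [← Polynomial.eval_eq_sum_range, ← hie]
          rfl
    | zero =>
        intro f hf s hs
        refine ⟨0, I.zero_mem, ?_⟩
        simp
    | one =>
        intro f hf
        simpa using hf
    | add x y hx hy ihx ihy =>
        intro f hf s hs
        obtain ⟨i, hi, hie⟩ := ihx f hf s hs
        obtain ⟨j, hj, hje⟩ := ihy f hf s hs
        refine ⟨i + j, I.add_mem hi hj, ?_⟩
        push_cast
        rw [Polynomial.C_add, mul_add, Polynomial.eval_add, ← hie, ← hje]
    | neg x hx ihx =>
        intro f hf s hs
        obtain ⟨i, hi, hie⟩ := ihx f hf s hs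
        refine ⟨-i, I.neg_mem hi, ?_⟩
        push_cast
        rw [Polynomial.C_neg, mul_neg, Polynomial.eval_neg, ← hie]
    | mul x y hx hy ihx ihy =>
        intro f hf
        have h1 := ihx f hf
        have h2 := ihy _ h1
        push_cast
        rw [Polynomial.C_mul, ← mul_assoc]
        exact h2
  refine ⟨fun f hf t => key Set.univ (by intros; trivial) t f hf,
    fun S hS f hf t => key S hS t f hf⟩
end

section
/- Let D be an integral domain with quotient field K, A a finitely generated torsion-free D-algebra, B = A ⊗_D K, with A ∩ K = D under the canonical embeddings into B. Suppose A is generated by units as an algebra over its center, and let S ⊆ A be closed under conjugation by units of A (u s u^{-1} ∈ S whenever s ∈ S and u is a unit of A). Then Int^r_B(S,A) is closed under multiplication, i.e., S is a right ringset. -/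
open Polynomial TensorProduct

section Aux

variable {R : Type*} [Ring R]

/-- Evaluation of `F * C b` as a sum. -/
lemma eval_mul_C_sum (F : R[X]) (b s : R) :
    (F * C b).eval s = F.sum fun i a => a * b * s ^ i := by
  induction F using Polynomial.induction_on' with
  | add p q hp hq =>
      rw [add_mul, eval_add, hp, hq,
        Polynomial.sum_add_index p q _ (by simp) (by intros; rw [add_mul, add_mul])]
  | monomial n a =>
      rw [monomial_mul_C, eval_monomial,
        Polynomial.sum_monomial_index a _ (by simp)]

/-- Evaluation of `F * G` as a sum over the coefficients of `F`. -/
lemma eval_mul_sum (F G : R[X]) (s : R) :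
    (F * G).eval s = F.sum fun i a => a * G.eval s * s ^ i := by
  induction F using Polynomial.induction_on' with
  | add p q hp hq =>
      rw [add_mul, eval_add, hp, hq,
        Polynomial.sum_add_index p q _ (by simp) (by intros; rw [add_mul, add_mul])]
  | monomial n a =>
      rw [Polynomial.sum_monomial_index a _ (by simp)]
      have : (monomial n a) * G = C a * G * X ^ n := by
        rw [← C_mul_X_pow_eq_monomial, mul_assoc, X_pow_mul, ← mul_assoc]
      rw [this, eval_mul_X_pow, eval_C_mul, mul_assoc]

/-- The key identity: right evaluation of a product. -/
lemma eval_mul_eq_eval_mul_C (F G : R[X]) (s : R) :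
    (F * G).eval s = (F * C (G.eval s)).eval s := by
  rw [eval_mul_sum, eval_mul_C_sum]

end Aux

/-- If `A` is generated by units as an algebra over its center (every element of `A`
is a finite sum of products of central elements and units of `A`), and `S ⊆ A` is
closed under conjugation by units of `A`, then `Int^r_B(S,A)` is closed under
multiplication, i.e. `S` is a right ringset. -/
theorem rightRingset_of_generated_by_units
    (D : Type*) [CommRing D] [IsDomain D]
    (K : Type*) [Field K] [Algebra D K] [IsFractionRing D K]
    (A : Type*) [Ring A] [Algebra D A] [Module.Finite D A] [NoZeroSMulDivisors D A]
    (hAK : ∀ b : A ⊗[D] K,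
      b ∈ Set.range (Algebra.TensorProduct.includeLeftRingHom (R := D) (A := A) (B := K)) →
      b ∈ Set.range (Algebra.TensorProduct.includeRight (R := D) (A := A) (B := K)) →
      b ∈ Set.range (algebraMap D (A ⊗[D] K)))
    (hgen : Subring.closure (Set.center A ∪ {u : A | IsUnit u}) = ⊤)
    (S : Set A) (hS : ∀ u : Aˣ, ∀ s ∈ S, (u : A) * s * ((u⁻¹ : Aˣ) : A) ∈ S) :
    ∀ F ∈ IntRight D K A S, ∀ G ∈ IntRight D K A S, F * G ∈ IntRight D K A S := by
  set ι := Algebra.TensorProduct.includeLeftRingHom (R := D) (A := A) (B := K) with hι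
  -- the subring of elements `a` such that multiplying an integer-valued polynomial
  -- by `C (ι a)` on the right preserves integer-valuedness
  let P : Subring A :=
    { carrier := {a : A | ∀ F' ∈ IntRight D K A S, F' * C (ι a) ∈ IntRight D K A S}
      one_mem' := by
        intro F' hF'
        simpa using hF'
      mul_mem' := by
        intro a b ha hb F' hF'
        have h : F' * C (ι (a * b)) = (F' * C (ι a)) * C (ι b) := by
          rw [map_mul, map_mul, mul_assoc]
        rw [h]
        exact hb _ (ha _ hF')
      zero_mem' := by
        intro F' _ s _
        refine ⟨0, ?_⟩
        simp
      add_mem' := by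
        intro a b ha hb F' hF' s hs
        obtain ⟨x, hx⟩ := ha F' hF' s hs
        obtain ⟨y, hy⟩ := hb F' hF' s hs
        refine ⟨x + y, ?_⟩
        rw [map_add, hx, hy, map_add, C_add, mul_add, eval_add]
      neg_mem' := by
        intro a ha F' hF' s hs
        obtain ⟨x, hx⟩ := ha F' hF' s hs
        refine ⟨-x, ?_⟩
        have h : F' * C (ι (-a)) = -(F' * C (ι a)) := by
          rw [map_neg, map_neg]
          exact mul_neg F' (C (ι a))
        rw [h, eval_neg, map_neg, hx] }
  have hPtop : ∀ a : A, a ∈ P := by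
    have hsub : Set.center A ∪ {u : A | IsUnit u} ⊆ (P : Set A) := by
      rintro a (ha | ha)
      · -- central case
        intro F' hF' s hs
        obtain ⟨b, hb⟩ := hF' s hs
        refine ⟨b * a, ?_⟩
        have hcomm : ∀ i : ℕ, ι a * (ι s) ^ i = (ι s) ^ i * ι a := by
          intro i
          have hcA : Commute a s := (Set.mem_center_iff.mp ha).comm s
          exact ((hcA.map ι).pow_right i).eq
        rw [eval_mul_C_sum]
        have : (F'.sum fun i c => c * ι a * (ι s) ^ i)
            = (F'.sum fun i c => c * (ι s) ^ i) * ι a := by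
          rw [Polynomial.sum_def, Polynomial.sum_def, Finset.sum_mul]
          refine Finset.sum_congr rfl fun i _ => ?_
          rw [mul_assoc, hcomm i, mul_assoc]
        rw [this, ← eval_eq_sum, ← hb, map_mul]
      · -- unit case
        obtain ⟨u, rfl⟩ := ha
        intro F' hF' s hs
        have hs' : (u : A) * s * ((u⁻¹ : Aˣ) : A) ∈ S := hS u s hs
        obtain ⟨b, hb⟩ := hF' ((u : A) * s * ((u⁻¹ : Aˣ) : A)) hs'
        refine ⟨b * u, ?_⟩
        have hkey : ∀ i : ℕ, ι u * (ι s) ^ i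
            = (ι ((u : A) * s * ((u⁻¹ : Aˣ) : A))) ^ i * ι u := by
          intro i
          rw [← map_pow, ← map_pow, ← map_mul, ← map_mul]
          congr 1
          rw [Units.conj_pow, mul_assoc, Units.inv_mul, mul_one]
        rw [eval_mul_C_sum]
        have : (F'.sum fun i c => c * ι u * (ι s) ^ i)
            = (F'.sum fun i c => c * (ι ((u : A) * s * ((u⁻¹ : Aˣ) : A))) ^ i) * ι u := by
          rw [Polynomial.sum_def, Polynomial.sum_def, Finset.sum_mul]
          refine Finset.sum_congr rfl fun i _ => ?_
          rw [mul_assoc, hkey i, ← mul_assoc]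
        rw [this, ← eval_eq_sum, ← hb, map_mul]
    intro a
    have : a ∈ Subring.closure (Set.center A ∪ {u : A | IsUnit u}) := by
      rw [hgen]; trivial
    exact Subring.closure_le.mpr hsub this
  intro F hF G hG s hs
  obtain ⟨a, ha⟩ := hG s hs
  have h1 : (F * G).eval (ι s) = (F * C (ι a)).eval (ι s) := by
    rw [eval_mul_eq_eval_mul_C, ha]
  have h2 := hPtop a F hF s hs
  show (F * G).eval (ι s) ∈ Set.range ι
  rw [h1]
  exact h2
end

section
/- Let R be a (possibly noncommutative) ring that is generated by units as an algebra over its center, and let S ⊆ R be closed under conjugation by units of R (u s u^{-1} ∈ S whenever s ∈ S and u is a unit of R). Then N^r_R(S) is a two-sided ideal of R[x], i.e., S is a right null-ideal set. -/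
open Polynomial

/-- The set `N^r_R(S)` of right null-polynomials on a subset `S` of `R`.
Mathlib's `Polynomial.eval s f = ∑ k, f.coeff k * s ^ k` is exactly right
evaluation `f_r(s)`. -/
def rightNullPolysOn (R : Type*) [Ring R] (S : Set R) : Set R[X] :=
  {f : R[X] | ∀ s ∈ S, f.eval s = 0}

/-- A subset `N` of a (possibly noncommutative) ring is a two-sided ideal:
an additive subgroup closed under multiplication by arbitrary elements on both sides. -/
def IsTwoSidedIdealSet {R : Type*} [Ring R] (N : Set R) : Prop :=
  0 ∈ N ∧ (∀ a ∈ N, ∀ b ∈ N, a + b ∈ N) ∧ (∀ a ∈ N, -a ∈ N) ∧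
    (∀ g : R, ∀ a ∈ N, g * a ∈ N) ∧ (∀ g : R, ∀ a ∈ N, a * g ∈ N)

/-- Right evaluation of `f * C u` at `s`, for a unit `u`, is
`f.eval (u s u⁻¹) * u`. -/
lemma eval_mul_C_unit {R : Type*} [Ring R] (f : R[X]) (u : Rˣ) (s : R) :
    (f * C (u : R)).eval s = f.eval ((u : R) * s * ((u⁻¹ : Rˣ) : R)) * u := by
  induction f using Polynomial.induction_on' with
  | add p q hp hq => simp [add_mul, hp, hq]
  | monomial n a =>
    rw [monomial_mul_C, eval_monomial, eval_monomial, u.conj_pow]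
    simp [mul_assoc]

/-- Right evaluation of `f * C c` at `s`, for a central `c`, is `f.eval s * c`. -/
lemma eval_mul_C_central {R : Type*} [Ring R] (f : R[X]) {c : R}
    (hc : c ∈ Set.center R) (s : R) :
    (f * C c).eval s = f.eval s * c := by
  induction f using Polynomial.induction_on' with
  | add p q hp hq => simp [add_mul, hp, hq]
  | monomial n a =>
    rw [monomial_mul_C, eval_monomial, eval_monomial, mul_assoc, mul_assoc,
      (Set.mem_center_iff.mp hc).comm (s ^ n)]

/-- If `R` is generated by units as an algebra over its center (every element of `R`
is a finite sum of products of central elements and units of `R`), and `S ⊆ R` is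
closed under conjugation by units of `R`, then `N^r_R(S)` is a (two-sided) ideal of
`R[x]`, i.e. `S` is a right null-ideal set. -/
theorem rightNullPolysOn_isTwoSidedIdeal_of_generated_by_units
    (R : Type*) [Ring R]
    (hgen : Subring.closure (Set.center R ∪ {u : R | IsUnit u}) = ⊤)
    (S : Set R) (hS : ∀ u : Rˣ, ∀ s ∈ S, (u : R) * s * ((u⁻¹ : Rˣ) : R) ∈ S) :
    IsTwoSidedIdealSet (rightNullPolysOn R S) := by
  set N := rightNullPolysOn R S with hNdef
  have h0 : (0 : R[X]) ∈ N := fun s _ => by simp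
  have hadd : ∀ a ∈ N, ∀ b ∈ N, a + b ∈ N := by
    intro a ha b hb s hs
    simp [eval_add, ha s hs, hb s hs]
  have hneg : ∀ a ∈ N, -a ∈ N := by
    intro a ha s hs
    simp [eval_neg, ha s hs]
  -- The set of polynomials `g` such that `N * g ⊆ N` is a subring of `R[X]`.
  let T : Subring R[X] :=
    { carrier := {g : R[X] | ∀ f ∈ N, f * g ∈ N}
      one_mem' := by intro f hf; simpa using hf
      mul_mem' := by
        intro a b ha hb f hf
        rw [← mul_assoc]
        exact hb _ (ha _ hf)
      zero_mem' := by intro f hf; simpa using h0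
      add_mem' := by
        intro a b ha hb f hf
        rw [mul_add]
        exact hadd _ (ha _ hf) _ (hb _ hf)
      neg_mem' := by
        intro a ha f hf
        rw [mul_neg]
        exact hneg _ (ha _ hf) }
  have hX : X ∈ T := by
    intro f hf s hs
    rw [eval_mul_X, hf s hs, zero_mul]
  have hC : ∀ a : R, C a ∈ T := by
    intro a
    have ha : a ∈ Subring.closure (Set.center R ∪ {u : R | IsUnit u}) := by
      rw [hgen]; trivial
    refine Subring.closure_induction ?_ ?_ ?_ ?_ ?_ ?_ ha
    · rintro b (hb | hb)
      · intro f hf s hs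
        rw [eval_mul_C_central f hb, hf s hs, zero_mul]
      · obtain ⟨u, rfl⟩ := hb
        intro f hf s hs
        rw [eval_mul_C_unit, hf _ (hS u s hs), zero_mul]
    · simpa using T.zero_mem
    · simpa using T.one_mem
    · intro x y _ _ hx hy
      simpa [map_add] using T.add_mem hx hy
    · intro x _ hx
      simpa [map_neg] using T.neg_mem hx
    · intro x y _ _ hx hy
      simpa [map_mul] using T.mul_mem hx hy
  have hright : ∀ g : R[X], ∀ a ∈ N, a * g ∈ N := by
    intro g
    have hg : g ∈ T := by
      induction g using Polynomial.induction_on' with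
      | add p q hp hq => exact T.add_mem hp hq
      | monomial n a =>
        have : (monomial n a : R[X]) = C a * X ^ n := by
          rw [C_mul_X_pow_eq_monomial]
        rw [this]
        exact T.mul_mem (hC a) (T.pow_mem hX n)
    exact hg
  have hleft : ∀ g : R[X], ∀ a ∈ N, g * a ∈ N := by
    intro g f hf
    induction g using Polynomial.induction_on' with
    | add p q hp hq =>
      rw [add_mul]
      exact hadd _ hp _ hq
    | monomial n a =>
      have : (monomial n a : R[X]) * f = C a * (f * X ^ n) := by
        rw [← C_mul_X_pow_eq_monomial, mul_assoc, X_pow_mul]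
      rw [this]
      intro s hs
      rw [eval_C_mul, hright (X ^ n) f hf s hs, mul_zero]
  exact ⟨h0, hadd, hneg, hleft, hright⟩
end
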